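/- Let Ψ ∈ ℂ^{N×n} have DFT-incoherence parameter γ and set A = (√N/√m) S Ψ ∈ ℂ^{m×n}. Then for every choice of sample points t̃_1,…,t̃_m ∈ ℝ and every k ∈ {1,…,m} and ℓ ∈ {1,…,n}, the entries of A satisfy |A_{kℓ}| ≤ γ/√m. -/

import Mathlib

open scoped BigOperators
open MeasureTheory Matrix

noncomputable section

/-- The complex exponential `e(x) = exp(2πix)`. -/
def ce (x : ℝ) : ℂ := Complex.exp (2 * Real.pi * Complex.I * x)

/-- Half-bandwidth `Ñ = (N-1)/2`. -/
def Nt (N : ℕ) : ℤ := ((N : ℤ) - 1) / 2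

/-- Uniform grid point `t_p = (p-1)/N - 1/2` (zero-based index). -/
def tg (N : ℕ) (p : Fin N) : ℝ := (p : ℝ) / N - 1 / 2

/-- Dirichlet interpolation matrix `S ∈ ℂ^{m×N}`. -/
def dirS (N m : ℕ) (tt : Fin m → ℝ) : Matrix (Fin m) (Fin N) ℂ :=
  fun k p => (N : ℂ)⁻¹ * ∑ u ∈ Finset.Icc (-(Nt N)) (Nt N), ce (u * (tg N p - tt k))

/-- Centered DFT matrix `F ∈ ℂ^{N×N}`. -/
def dftF (N : ℕ) : Matrix (Fin N) (Fin N) ℂ :=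
  fun p u => ((Real.sqrt N : ℂ))⁻¹ * ce (-(tg N p) * ((u : ℤ) - Nt N))

/-- DFT-incoherence parameter of `Ψ`. -/
def dftIncoh (N n : ℕ) (Ψ : Matrix (Fin N) (Fin n) ℂ) : ℝ :=
  ⨆ ℓ : Fin n, ∑ k : Fin N, ‖((dftF N)ᴴ * Ψ) k ℓ‖

/-- Euclidean norm on `ℂ^n`. -/
def norm2 {n : ℕ} (v : Fin n → ℂ) : ℝ := Real.sqrt (∑ i, ‖v i‖ ^ 2)

/-- `ℓ₁` norm on `ℂ^n`. -/
def norm1 {n : ℕ} (v : Fin n → ℂ) : ℝ := ∑ i, ‖v i‖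

/-- `v` has at most `s` nonzero entries. -/
def Sparse {n : ℕ} (s : ℕ) (v : Fin n → ℂ) : Prop :=
  (Finset.univ.filter fun i => v i ≠ 0).card ≤ s

/-- Error of the best `s`-sparse approximation of `g` in `ℓ₁`. -/
def sperr {n : ℕ} (s : ℕ) (g : Fin n → ℂ) : ℝ :=
  sInf {r : ℝ | ∃ h : Fin n → ℂ, Sparse s h ∧ r = norm1 (fun i => h i - g i)}

/-- The 1-periodic signal with Fourier coefficients `c`. -/
def fcont (c : ℤ → ℂ) (x : ℝ) : ℂ := ∑' ℓ : ℤ, c ℓ * ce (ℓ * x)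

/-- Tail `∑_{|ℓ|>Ñ} |c_ℓ|` of the Fourier coefficients. -/
def tailSum (N : ℕ) (c : ℤ → ℂ) : ℝ :=
  ∑' ℓ : ℤ, if Nt N < |ℓ| then ‖c ℓ‖ else 0

/-- The distribution `𝒟` satisfies the deviation model with parameter `θ`. -/
def DevModel (N m : ℕ) (𝒟 : Measure ℝ) (θ : ℝ) : Prop :=
  ∀ j : ℤ, j ≠ 0 → (|j| : ℝ) ≤ 2 * ((N : ℝ) - 1) / m →
    (2 * N / m) * ‖∫ x, ce (((j * m : ℤ) : ℝ) * x) ∂𝒟‖ ≤ θ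

/-- The random nonuniform sample points `t̃_k = (k-1)/m - 1/2 + Δ_k`. -/
def samplePts {Ω : Type*} (m : ℕ) (Δ : Fin m → Ω → ℝ) (ω : Ω) : Fin m → ℝ :=
  fun k => (k : ℝ) / m - 1 / 2 + Δ k ω

end



lemma ce_add (x y : ℝ) : ce (x + y) = ce x * ce y := by
  rw [ce, ce, ce, ← Complex.exp_add]
  congr 1
  push_cast
  ring

lemma abs_ce (x : ℝ) : ‖ce x‖ = 1 := by
  rw [ce, Complex.norm_exp]
  have : (2 * (Real.pi : ℂ) * Complex.I * (x : ℂ)).re = 0 := by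
    simp [Complex.mul_re, Complex.mul_im]
  rw [this, Real.exp_zero]

lemma conj_ce (x : ℝ) : (starRingEnd ℂ) (ce x) = ce (-x) := by
  rw [ce, ce, ← Complex.exp_conj]
  congr 1
  push_cast
  rw [_root_.map_mul, _root_.map_mul, _root_.map_mul, Complex.conj_I, Complex.conj_ofReal,
    Complex.conj_ofReal, Complex.conj_ofNat]
  ring

/-- the entries of `A = (√N/√m) S Ψ` are uniformly bounded by `γ/√m`,
where `γ` is the DFT-incoherence parameter of `Ψ`. -/
theorem entry_bound_of_dftIncoh
    (N n m : ℕ) (hN : Odd N) (hNpos : 0 < N) (hm : 0 < m) (hn : 0 < n)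
    (Ψ : Matrix (Fin N) (Fin n) ℂ)
    (tt : Fin m → ℝ)
    (A : Matrix (Fin m) (Fin n) ℂ)
    (hA : A = ((Real.sqrt N : ℂ) / (Real.sqrt m : ℂ)) • (dirS N m tt * Ψ)) :
    ∀ (k : Fin m) (ℓ : Fin n),
      ‖A k ℓ‖ ≤ dftIncoh N n Ψ / Real.sqrt m := by
  intro k ℓ
  have hNR : (0:ℝ) < N := by exact_mod_cast hNpos
  have hmR : (0:ℝ) < m := by exact_mod_cast hm
  have hsN : (0:ℝ) < Real.sqrt N := Real.sqrt_pos.2 hNR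
  have hsm : (0:ℝ) < Real.sqrt m := Real.sqrt_pos.2 hmR
  obtain ⟨j, hj⟩ := hN
  have hj' : (N:ℤ) = 2 * j + 1 := by exact_mod_cast hj
  have hNt : 2 * Nt N + 1 = (N:ℤ) := by simp only [Nt]; omega
  set X : ℤ → ℂ := fun u => ∑ p : Fin N, ce ((u:ℝ) * tg N p) * Ψ p ℓ with hX
  -- step 1: rewrite the matrix product entry
  have hstep : (dirS N m tt * Ψ) k ℓ
      = (N:ℂ)⁻¹ * ∑ u ∈ Finset.Icc (-(Nt N)) (Nt N), ce (-((u:ℝ) * tt k)) * X u := by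
    rw [Matrix.mul_apply, Finset.mul_sum]
    simp only [dirS, hX, Finset.mul_sum, Finset.sum_mul]
    rw [Finset.sum_comm]
    refine Finset.sum_congr rfl fun u _ => Finset.sum_congr rfl fun p _ => ?_
    have harg : (u:ℝ) * (tg N p - tt k) = (-((u:ℝ) * tt k)) + (u:ℝ) * tg N p := by ring
    rw [harg, ce_add]
    ring
  -- step 2: identify X with the DFT columns
  have hF : ∀ v : Fin N, ((dftF N)ᴴ * Ψ) v ℓ
      = ((Real.sqrt N : ℂ))⁻¹ * X ((v:ℤ) - Nt N) := by
    intro v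
    rw [Matrix.mul_apply, hX, Finset.mul_sum]
    refine Finset.sum_congr rfl fun p _ => ?_
    simp only [Matrix.conjTranspose_apply, dftF, Complex.star_def, _root_.map_mul,
      map_inv₀, Complex.conj_ofReal, conj_ce]
    rw [mul_assoc]
    congr 2
    congr 1
    push_cast
    ring
  -- step 3
  have hXabs : ∀ v : Fin N, ‖X ((v:ℤ) - Nt N)‖
      = Real.sqrt N * ‖((dftF N)ᴴ * Ψ) v ℓ‖ := by
    intro v
    rw [hF v, norm_mul, norm_inv, Complex.norm_real, Real.norm_of_nonneg hsN.le]
    field_simp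
  -- step 4: bijection between Icc and Fin N
  have hbij : ∑ u ∈ Finset.Icc (-(Nt N)) (Nt N), ‖X u‖
      = ∑ v : Fin N, ‖X ((v:ℤ) - Nt N)‖ := by
    refine Finset.sum_bij (i := fun (u : ℤ) (hu : u ∈ Finset.Icc (-(Nt N)) (Nt N)) =>
        (⟨(u + Nt N).toNat, by simp only [Finset.mem_Icc] at hu; omega⟩ : Fin N))
      ?_ ?_ ?_ ?_
    · intro u hu; exact Finset.mem_univ _
    · intro u₁ hu₁ u₂ hu₂ h
      simp only [Fin.mk.injEq] at h
      simp only [Finset.mem_Icc] at hu₁ hu₂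
      omega
    · intro v _
      have hv : ((v : ℕ) : ℤ) < N := by exact_mod_cast v.isLt
      refine ⟨(v : ℤ) - Nt N, ?_, ?_⟩
      · simp only [Finset.mem_Icc]; omega
      · ext; simp only [Fin.val_mk]; omega
    · intro u hu
      simp only [Finset.mem_Icc] at hu
      congr 1
      congr 1
      simp only [Fin.val_mk]
      omega
  -- step 5
  have hAval : ‖A k ℓ‖
      = (Real.sqrt N / Real.sqrt m) * ‖(dirS N m tt * Ψ) k ℓ‖ := by
    rw [hA, Matrix.smul_apply, smul_eq_mul, norm_mul, norm_div,
      Complex.norm_real, Complex.norm_real, Real.norm_of_nonneg hsN.le, Real.norm_of_nonneg hsm.le]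
  have hbound : ‖(dirS N m tt * Ψ) k ℓ‖
      ≤ (N:ℝ)⁻¹ * ∑ u ∈ Finset.Icc (-(Nt N)) (Nt N), ‖X u‖ := by
    rw [hstep, norm_mul, norm_inv, Complex.norm_natCast]
    refine mul_le_mul_of_nonneg_left ?_ (by positivity)
    refine (norm_sum_le _ _).trans (le_of_eq ?_)
    refine Finset.sum_congr rfl fun u _ => ?_
    rw [norm_mul, abs_ce, one_mul]
  set S : ℝ := ∑ v : Fin N, ‖((dftF N)ᴴ * Ψ) v ℓ‖ with hS
  have hkey : ‖(dirS N m tt * Ψ) k ℓ‖ ≤ (N:ℝ)⁻¹ * (Real.sqrt N * S) := by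
    refine hbound.trans (le_of_eq ?_)
    rw [hbij, hS]
    congr 1
    rw [Finset.mul_sum]
    exact Finset.sum_congr rfl fun v _ => hXabs v
  have hγ : S ≤ dftIncoh N n Ψ :=
    le_ciSup (f := fun ℓ' => ∑ v : Fin N, ‖((dftF N)ᴴ * Ψ) v ℓ'‖)
      (Set.Finite.bddAbove (Set.finite_range _)) ℓ
  have hss : Real.sqrt ↑N * Real.sqrt ↑N = (N:ℝ) := Real.mul_self_sqrt hNR.le
  calc ‖A k ℓ‖
      = (Real.sqrt N / Real.sqrt m) * ‖(dirS N m tt * Ψ) k ℓ‖ := hAval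
    _ ≤ (Real.sqrt N / Real.sqrt m) * ((N:ℝ)⁻¹ * (Real.sqrt N * S)) :=
        mul_le_mul_of_nonneg_left hkey (by positivity)
    _ = S / Real.sqrt m := by
        have h1 : Real.sqrt ↑N / Real.sqrt ↑m * ((↑N)⁻¹ * (Real.sqrt ↑N * S))
            = (Real.sqrt ↑N * Real.sqrt ↑N) * (↑N)⁻¹ * (S / Real.sqrt ↑m) := by ring
        rw [h1, hss, mul_inv_cancel₀ hNR.ne', one_mul]
    _ ≤ dftIncoh N n Ψ / Real.sqrt m := by gcongr
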